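/- arXiv:math/9904145 — 2 statements merged into one kernel-verified Lean document; each statement's English description precedes it below -/
import Mathlib

section
/- Let f: G → H be a homomorphism of simplicial groups such that f_n: G_n → H_n is surjective for every n. Then the induced map of underlying simplicial sets is a Kan fibration. -/
open CategoryTheory Simplicial SimplexCategory Opposite
universe u
set_option maxHeartbeats 1000000
namespace Moore
variable {G H : SimplexCategoryᵒᵖ ⥤ GrpCat.{u}}

def dd {m : ℕ} (j : Fin (m+2)) (g : G.obj (op ⦋m+1⦌)) : G.obj (op ⦋m⦌) :=
  G.map (SimplexCategory.δ j).op g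
def ss {m : ℕ} (j : Fin (m+1)) (g : G.obj (op ⦋m⦌)) : G.obj (op ⦋m+1⦌) :=
  G.map (SimplexCategory.σ j).op g

lemma dd_mul {m : ℕ} (j : Fin (m+2)) (g h : G.obj (op ⦋m+1⦌)) :
    dd j (g * h) = dd j g * dd j h := map_mul _ _ _
lemma dd_inv {m : ℕ} (j : Fin (m+2)) (g : G.obj (op ⦋m+1⦌)) :
    dd j g⁻¹ = (dd j g)⁻¹ := map_inv _ _
lemma ss_one {m : ℕ} (j : Fin (m+1)) : ss (G := G) j 1 = 1 := map_one _

lemma elem_comp {a b c : SimplexCategory} (p : a ⟶ b) (q : b ⟶ c) (g : G.obj (op c)) :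
    G.map (p ≫ q).op g = G.map p.op (G.map q.op g) := by
  rw [op_comp, G.map_comp]; rfl

lemma DD {m : ℕ} (a b : Fin (m+2)) (hab : a ≤ b) (g : G.obj (op ⦋m+2⦌)) :
    dd a (dd b.succ g) = dd b (dd a.castSucc g) := by
  rw [dd, dd, ← elem_comp, δ_comp_δ hab, elem_comp]; rfl

lemma V3 {m : ℕ} (t : Fin (m+1)) (z : G.obj (op ⦋m⦌)) :
    dd t.castSucc (ss t z) = z := by
  rw [dd, ss, ← elem_comp, δ_comp_σ_self, op_id, G.map_id]; rfl

lemma V4 {m : ℕ} (t : Fin (m+1)) (z : G.obj (op ⦋m⦌)) :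
    dd t.succ (ss t z) = z := by
  rw [dd, ss, ← elem_comp, δ_comp_σ_succ, op_id, G.map_id]; rfl

lemma V1 {m : ℕ} (a : Fin (m+2)) (t : Fin (m+1)) (H : a ≤ t.castSucc) (z : G.obj (op ⦋m+1⦌)) :
    dd a.castSucc (ss t.succ z) = ss t (dd a z) := by
  rw [dd, ss, ← elem_comp, δ_comp_σ_of_le H, elem_comp]; rfl

lemma V2 {m : ℕ} (b : Fin (m+2)) (c : Fin (m+1)) (H : c.castSucc < b) (z : G.obj (op ⦋m+1⦌)) :
    dd b.succ (ss c.castSucc z) = ss c (dd b z) := by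
  rw [dd, ss, ← elem_comp, δ_comp_σ_of_gt H, elem_comp]; rfl

lemma nat_app (f : G ⟶ H) {X Y : SimplexCategoryᵒᵖ} (u : X ⟶ Y) (g : G.obj X) :
    f.app Y (G.map u g) = H.map u (f.app X g) := by
  calc f.app Y (G.map u g) = (G.map u ≫ f.app Y) g := rfl
    _ = (f.app X ≫ H.map u) g := by rw [f.naturality u]
    _ = H.map u (f.app X g) := rfl

lemma ker_map (f : G ⟶ H) {X Y : SimplexCategoryᵒᵖ} (u : X ⟶ Y) (g : G.obj X)
    (hg : f.app X g = 1) : f.app Y (G.map u g) = 1 := by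
  rw [nat_app, hg, map_one]

lemma dd_def {m : ℕ} (j : Fin (m+2)) (g : G.obj (op ⦋m+1⦌)) :
    dd (G := G) j g = G.map (SimplexCategory.δ j).op g := rfl

/-- identity viewing an element of the underlying simplicial set as a group element -/
def elG {X : SimplexCategoryᵒᵖ} (a : (G ⋙ forget GrpCat.{u}).obj X) : G.obj X := a

lemma ker_dd (f : G ⟶ H) {m : ℕ} (j : Fin (m+2)) (w : G.obj (op ⦋m+1⦌))
    (h : f.app _ w = 1) : f.app _ (dd j w) = 1 := ker_map f _ w h
lemma ker_ss (f : G ⟶ H) {m : ℕ} (j : Fin (m+1)) (w : G.obj (op ⦋m⦌))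
    (h : f.app _ w = 1) : f.app _ (ss j w) = 1 := ker_map f _ w h

lemma up (f : G ⟶ H) (m : ℕ) (i : Fin (m+3)) (x : Fin (m+3) → G.obj (op ⦋m+1⦌))
    (hcomp : ∀ (a b : Fin (m+2)), a ≤ b → a.castSucc ≠ i → b.succ ≠ i →
      dd a (x b.succ) = dd b (x a.castSucc))
    (hker : ∀ j, j ≠ i → f.app _ (x j) = 1) :
    ∀ t : ℕ, t ≤ (i : ℕ) →
      ∃ w : G.obj (op ⦋m+2⦌), f.app _ w = 1 ∧
        ∀ j : Fin (m+3), (j : ℕ) < t → dd j w = x j := by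
  intro t
  induction t with
  | zero => exact fun _ => ⟨1, map_one _, fun j hj => absurd hj (by omega)⟩
  | succ t ih =>
    intro ht
    obtain ⟨w, hw1, hwf⟩ := ih (by omega)
    have hti : t < (i : ℕ) := ht
    have him : (i : ℕ) < m + 3 := i.isLt
    have htm : t < m + 2 := by omega
    set T : Fin (m+2) := ⟨t, htm⟩ with hTdef
    have hTi : T.castSucc ≠ i := Fin.ne_of_val_ne (show t ≠ (i : ℕ) by omega)
    set z : G.obj (op ⦋m+1⦌) := (dd T.castSucc w)⁻¹ * x T.castSucc with hz
    have hzker : f.app _ z = 1 := by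
      rw [hz, map_mul, map_inv, ker_dd f _ _ hw1, hker _ hTi, inv_one, one_mul]
    refine ⟨w * ss T z, ?_, ?_⟩
    · rw [map_mul, hw1, one_mul]; exact ker_ss f _ _ hzker
    · intro j hj
      by_cases hjt : (j : ℕ) = t
      · have hje : j = T.castSucc := Fin.ext (by simpa using hjt)
        rw [hje, dd_mul, V3, hz, mul_inv_cancel_left]
      · have hjt' : (j : ℕ) < t := by omega
        rw [dd_mul, hwf j hjt']
        suffices h : dd j (ss T z) = 1 by rw [h, mul_one]
        have hjm : (j : ℕ) < m + 2 := by omega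
        set a : Fin (m+2) := ⟨j, hjm⟩ with hadef
        have haj : a.castSucc = j := Fin.ext rfl
        have ht1 : t - 1 < m + 1 := by omega
        set t' : Fin (m+1) := ⟨t-1, ht1⟩ with ht'def
        have hT : T = t'.succ := Fin.ext (by simp [hTdef, ht'def]; omega)
        have hat' : a ≤ t'.castSucc := by
          rw [Fin.le_def]; exact (show (j : ℕ) ≤ t - 1 by omega)
        rw [← haj, hT, V1 a t' hat']
        suffices hza : dd a z = 1 by rw [hza, ss_one]
        have hTc : T.castSucc = (t'.castSucc).succ := Fin.ext (by simp [hTdef, ht'def]; omega)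
        have hacs : a.castSucc ≠ i := Fin.ne_of_val_ne (show (j : ℕ) ≠ (i : ℕ) by omega)
        have hacv : ((a.castSucc : Fin (m+3)) : ℕ) < t := by simpa using hjt'
        rw [hz, dd_mul, dd_inv, hTc, DD a t'.castSucc hat' w,
          hwf a.castSucc hacv,
          hcomp a t'.castSucc hat' hacs (hTc ▸ hTi), inv_mul_cancel]

lemma down (f : G ⟶ H) (m : ℕ) (i : Fin (m+3)) (x : Fin (m+3) → G.obj (op ⦋m+1⦌))
    (hcomp : ∀ (a b : Fin (m+2)), a ≤ b → a.castSucc ≠ i → b.succ ≠ i →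
      dd a (x b.succ) = dd b (x a.castSucc))
    (hker : ∀ j, j ≠ i → f.app _ (x j) = 1) :
    ∀ k : ℕ, (i : ℕ) + 1 ≤ m + 3 - k →
      ∃ w : G.obj (op ⦋m+2⦌), f.app _ w = 1 ∧
        (∀ j : Fin (m+3), (j : ℕ) < (i : ℕ) → dd j w = x j) ∧
        (∀ j : Fin (m+3), m + 3 - k ≤ (j : ℕ) → dd j w = x j) := by
  intro k
  induction k with
  | zero =>
    intro _
    obtain ⟨w, hw1, hwf⟩ := up f m i x hcomp hker i (le_refl _)
    exact ⟨w, hw1, fun j hj => hwf j hj, fun j hj => absurd hj (by omega)⟩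
  | succ k ih =>
    intro hk
    have him : (i : ℕ) < m + 3 := i.isLt
    have hkm : k ≤ m + 1 := by omega
    obtain ⟨w, hw1, hlow, hhigh⟩ := ih (by omega)
    obtain ⟨R, hRv⟩ : ∃ R : Fin (m+3), (R : ℕ) = m + 2 - k := ⟨⟨m + 2 - k, by omega⟩, rfl⟩
    obtain ⟨R', hR'v⟩ : ∃ R' : Fin (m+2), (R' : ℕ) = (R : ℕ) - 1 := ⟨⟨(R : ℕ) - 1, by omega⟩, rfl⟩
    have hir : (i : ℕ) + 1 ≤ (R : ℕ) := by omega
    have hhigh' : ∀ j : Fin (m+3), (R : ℕ) + 1 ≤ (j : ℕ) → dd j w = x j := by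
      intro j hj; exact hhigh j (by omega)
    have hR : R = R'.succ := Fin.ext (by rw [Fin.val_succ, hR'v]; omega)
    have hRi : R ≠ i := Fin.ne_of_val_ne (by omega)
    obtain ⟨z, hz⟩ : ∃ z : G.obj (op ⦋m+1⦌), z = (dd R w)⁻¹ * x R := ⟨_, rfl⟩
    have hzker : f.app _ z = 1 := by
      rw [hz, map_mul, map_inv, ker_dd f _ _ hw1, hker _ hRi, inv_one, one_mul]
    refine ⟨w * ss R' z, ?_, ?_, ?_⟩
    · rw [map_mul, hw1, one_mul]; exact ker_ss f _ _ hzker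
    · -- faces j < i
      intro j hj
      rw [dd_mul, hlow j hj]
      suffices h : dd j (ss R' z) = 1 by rw [h, mul_one]
      have hij : (j : ℕ) < (R : ℕ) - 1 := by omega
      obtain ⟨a, hav⟩ : ∃ a : Fin (m+2), (a : ℕ) = (j : ℕ) := ⟨⟨(j : ℕ), by omega⟩, rfl⟩
      have haj : a.castSucc = j := Fin.ext (by rw [Fin.coe_castSucc, hav])
      obtain ⟨t', ht'v⟩ : ∃ t' : Fin (m+1), (t' : ℕ) = (R : ℕ) - 2 := ⟨⟨(R : ℕ) - 2, by omega⟩, rfl⟩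
      have hR't : R' = t'.succ := Fin.ext (by rw [Fin.val_succ, ht'v]; omega)
      have hat' : a ≤ t'.castSucc := by rw [Fin.le_def, Fin.coe_castSucc]; omega
      rw [← haj, hR't, V1 a t' hat']
      suffices hza : dd a z = 1 by rw [hza, ss_one]
      have haR' : a ≤ R' := by rw [Fin.le_def]; omega
      have hacs : a.castSucc ≠ i := Fin.ne_of_val_ne (by rw [Fin.coe_castSucc]; omega)
      have hacv : ((a.castSucc : Fin (m+3)) : ℕ) < (i : ℕ) := by rw [Fin.coe_castSucc]; omega
      rw [hz, dd_mul, dd_inv, hR, DD a R' haR' w, hlow a.castSucc hacv,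
        hcomp a R' haR' hacs (hR ▸ hRi), inv_mul_cancel]
    · -- faces j ≥ m+3-(k+1) = R
      intro j hj
      have hjr : (R : ℕ) ≤ (j : ℕ) := by omega
      by_cases hjR : (j : ℕ) = (R : ℕ)
      · have hje : j = R := Fin.ext hjR
        rw [hje, dd_mul, hR, V4, ← hR, hz, mul_inv_cancel_left]
      · have hjr1 : (R : ℕ) + 1 ≤ (j : ℕ) := by omega
        rw [dd_mul, hhigh' j hjr1]
        suffices h : dd j (ss R' z) = 1 by rw [h, mul_one]
        have hjm : (j : ℕ) ≤ m + 2 := by omega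
        obtain ⟨b, hbv⟩ : ∃ b : Fin (m+2), (b : ℕ) = (j : ℕ) - 1 := ⟨⟨(j : ℕ) - 1, by omega⟩, rfl⟩
        have hbj : b.succ = j := Fin.ext (by rw [Fin.val_succ, hbv]; omega)
        obtain ⟨c, hcv⟩ : ∃ c : Fin (m+1), (c : ℕ) = (R : ℕ) - 1 := ⟨⟨(R : ℕ) - 1, by omega⟩, rfl⟩
        have hcR : c.castSucc = R' := Fin.ext (by rw [Fin.coe_castSucc]; omega)
        have hcb : c.castSucc < b := by rw [Fin.lt_def, Fin.coe_castSucc]; omega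
        rw [← hbj, ← hcR, V2 b c hcb]
        suffices hzb : dd b z = 1 by rw [hzb, ss_one]
        obtain ⟨A, hAv⟩ : ∃ A : Fin (m+2), (A : ℕ) = (R : ℕ) := ⟨⟨(R : ℕ), by omega⟩, rfl⟩
        have hAR : A.castSucc = R := Fin.ext (by rw [Fin.coe_castSucc, hAv])
        have hAb : A ≤ b := by rw [Fin.le_def]; omega
        have hAi : A.castSucc ≠ i := hAR ▸ hRi
        have hbi : b.succ ≠ i := Fin.ne_of_val_ne (by rw [Fin.val_succ]; omega)
        rw [hz, dd_mul, dd_inv, ← hAR, ← DD A b hAb w, hbj, hhigh' j hjr1, ← hbj,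
          hcomp A b hAb hAi hbi, inv_mul_cancel]

lemma fill (f : G ⟶ H) (m : ℕ) (i : Fin (m+3)) (x : Fin (m+3) → G.obj (op ⦋m+1⦌))
    (hcomp : ∀ (a b : Fin (m+2)), a ≤ b → a.castSucc ≠ i → b.succ ≠ i →
      dd a (x b.succ) = dd b (x a.castSucc))
    (hker : ∀ j, j ≠ i → f.app _ (x j) = 1) :
    ∃ g : G.obj (op ⦋m+2⦌), f.app _ g = 1 ∧ ∀ j, j ≠ i → dd j g = x j := by
  have him : (i : ℕ) < m + 3 := i.isLt
  obtain ⟨w, hw1, hlow, hhigh⟩ := down f m i x hcomp hker (m + 2 - (i : ℕ)) (by omega)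
  refine ⟨w, hw1, fun j hj => ?_⟩
  have hne : (j : ℕ) ≠ (i : ℕ) := Fin.val_ne_of_ne hj
  rcases lt_or_gt_of_ne hne with h | h
  · exact hlow j h
  · exact hhigh j (by omega)


open SSet in
lemma lift_elem (f : G ⟶ H) (n : ℕ) (i : Fin (n+2))
    (hs : Function.Surjective (f.app (op ⦋n+1⦌)))
    (u : (Λ[n+1, i] : SSet.{u}) ⟶ (G ⋙ forget GrpCat.{u})) (y : H.obj (op ⦋n+1⦌))
    (hy : ∀ (j : Fin (n+2)) (hj : j ≠ i),
      H.map (SimplexCategory.δ j).op y = f.app _ (u.app (op ⦋n⦌) (horn.face i j hj))) :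
    ∃ g : G.obj (op ⦋n+1⦌), f.app _ g = y ∧
      ∀ (j : Fin (n+2)) (hj : j ≠ i),
        G.map (SimplexCategory.δ j).op g = u.app (op ⦋n⦌) (horn.face i j hj) := by
  obtain ⟨k, hk⟩ := hs y
  have hy' : ∀ (j : Fin (n+2)) (hj : j ≠ i),
      H.map (SimplexCategory.δ j).op y = f.app _ (elG (u.app (op ⦋n⦌) (horn.face i j hj))) := hy
  obtain ⟨x, hxspec⟩ : ∃ x : Fin (n+2) → G.obj (op ⦋n⦌),
      ∀ j (hj : j ≠ i),
        x j = elG (u.app (op ⦋n⦌) (horn.face i j hj)) * (dd j k)⁻¹ :=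
    ⟨fun j => if h : j = i then 1
      else elG (u.app (op ⦋n⦌) (horn.face i j h)) * (dd j k)⁻¹,
     fun j hj => by simp only [dif_neg hj]⟩
  have hdk : ∀ j : Fin (n+2), f.app _ (dd j k) = H.map (SimplexCategory.δ j).op y := by
    intro j; rw [dd_def, nat_app, hk]
  have hker : ∀ j, j ≠ i → f.app _ (x j) = 1 := by
    intro j hj
    rw [hxspec j hj, map_mul, map_inv, ← hy' j hj, hdk j, mul_inv_cancel]
  cases n with
  | zero =>
    have h01 : (1 : Fin 2) = Fin.succ (0 : Fin 1) := by decide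
    have h00 : (0 : Fin 2) = Fin.castSucc (0 : Fin 1) := by decide
    rcases (by omega : (i : ℕ) = 0 ∨ (i : ℕ) = 1) with hi | hi
    · have hi0 : i = 0 := Fin.ext (by simpa using hi)
      subst hi0
      refine ⟨ss 0 (x 1) * k, ?_, ?_⟩
      · rw [map_mul, ker_ss f _ _ (hker 1 (by decide)), one_mul, hk]
      · intro j hj
        have hj1 : j = 1 := Fin.ext
          (by have h' := Fin.val_ne_of_ne hj
              simp only [Fin.val_zero, Fin.val_one] at h' ⊢; omega)
        subst hj1
        have hV : dd (1 : Fin 2) (ss (0 : Fin 1) (x 1)) = x 1 := by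
          rw [h01]; exact V4 0 _
        show dd 1 (ss 0 (x 1) * k) = elG (u.app (op ⦋0⦌) (horn.face 0 1 hj))
        rw [dd_mul, hV, hxspec 1 (by decide), inv_mul_cancel_right]
    · have hi1 : i = 1 := Fin.ext (by simpa using hi)
      subst hi1
      refine ⟨ss 0 (x 0) * k, ?_, ?_⟩
      · rw [map_mul, ker_ss f _ _ (hker 0 (by decide)), one_mul, hk]
      · intro j hj
        have hj0 : j = 0 := Fin.ext
          (by have h' := Fin.val_ne_of_ne hj
              simp only [Fin.val_zero, Fin.val_one] at h' ⊢; omega)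
        subst hj0
        have hV : dd (0 : Fin 2) (ss (0 : Fin 1) (x 0)) = x 0 := by
          rw [h00]; exact V3 0 _
        show dd 0 (ss 0 (x 0) * k) = elG (u.app (op ⦋0⦌) (horn.face 1 0 hj))
        rw [dd_mul, hV, hxspec 0 (by decide), inv_mul_cancel_right]
  | succ n' =>
    have key : ∀ (a b : Fin (n'+2)), a ≤ b → ∀ (ha : a.castSucc ≠ i) (hb : b.succ ≠ i),
        dd a (elG (u.app (op ⦋n'+1⦌) (horn.face i b.succ hb)))
          = dd b (elG (u.app (op ⦋n'+1⦌) (horn.face i a.castSucc ha))) := by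
      intro a b hab ha hb
      have h1 : elG (u.app (op ⦋n'⦌)
            ((Λ[n'+2, i] : SSet.{u}).map (SimplexCategory.δ a).op (horn.face i b.succ hb)))
          = dd a (elG (u.app (op ⦋n'+1⦌) (horn.face i b.succ hb))) :=
        FunctorToTypes.naturality u _ _
      have h2 : elG (u.app (op ⦋n'⦌)
            ((Λ[n'+2, i] : SSet.{u}).map (SimplexCategory.δ b).op (horn.face i a.castSucc ha)))
          = dd b (elG (u.app (op ⦋n'+1⦌) (horn.face i a.castSucc ha))) :=
        FunctorToTypes.naturality u _ _
      have he : (Λ[n'+2, i] : SSet.{u}).map (SimplexCategory.δ a).op (horn.face i b.succ hb)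
          = (Λ[n'+2, i] : SSet.{u}).map (SimplexCategory.δ b).op (horn.face i a.castSucc ha) := by
        apply Subtype.ext
        show Δ[n'+2].map (SimplexCategory.δ a).op (stdSimplex.objEquiv.symm
            (SimplexCategory.δ b.succ))
          = Δ[n'+2].map (SimplexCategory.δ b).op (stdSimplex.objEquiv.symm
            (SimplexCategory.δ a.castSucc))
        rw [stdSimplex.map_apply, stdSimplex.map_apply]
        simp only [Equiv.apply_symm_apply, Quiver.Hom.unop_op]
        rw [δ_comp_δ hab]
      rw [← h1, ← h2, he]
    have hcomp : ∀ (a b : Fin (n'+2)), a ≤ b → a.castSucc ≠ i → b.succ ≠ i →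
        dd a (x b.succ) = dd b (x a.castSucc) := by
      intro a b hab ha hb
      rw [hxspec b.succ hb, hxspec a.castSucc ha, dd_mul, dd_mul, dd_inv, dd_inv,
        key a b hab ha hb, DD a b hab k]
    obtain ⟨w, hw1, hwf⟩ := fill f n' i x hcomp hker
    refine ⟨w * k, ?_, ?_⟩
    · rw [map_mul, hw1, one_mul, hk]
    · intro j hj
      show dd j (w * k) = elG (u.app (op ⦋n'+1⦌) (horn.face i j hj))
      rw [dd_mul, hwf j hj, hxspec j hj, inv_mul_cancel_right]

end Moore

open Simplicial SimplexCategory Opposite SSet Moore in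
/-- a levelwise surjective homomorphism of simplicial groups induces a
Kan fibration on underlying simplicial sets (RLP against all horn inclusions). -/
theorem surjective_simplicial_group_hom_is_kan_fibration
    (G H : SimplexCategoryᵒᵖ ⥤ GrpCat.{u}) (f : G ⟶ H)
    (hsurj : ∀ X : SimplexCategoryᵒᵖ, Function.Surjective (f.app X)) :
    ∀ (n : ℕ) (i : Fin (n + 1)),
      HasLiftingProperty (SSet.horn n i).ι (Functor.whiskerRight f (forget GrpCat)) := by
  intro n i
  constructor
  intro u v sq
  cases n with
  | zero =>
    have hempty : ∀ (X : SimplexCategoryᵒᵖ) (a : (Λ[0, i] : SSet.{u}).obj X), False := by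
      intro X a
      apply a.2
      rw [Set.eq_univ_iff_forall]
      intro z
      exact Or.inr (Set.mem_singleton_iff.mpr (Fin.ext (by omega)))
    obtain ⟨g, hgy⟩ := hsurj (op ⦋0⦌)
      (elG (G := H) (v.app (op ⦋0⦌) (stdSimplex.objEquiv.symm (𝟙 (⦋0⦌ : SimplexCategory)))))
    refine ⟨⟨⟨(SSet.yonedaEquiv (X := G ⋙ forget GrpCat.{u}) (n := ⦋0⦌)).symm g, ?_, ?_⟩⟩⟩
    · apply NatTrans.ext
      funext X; ext a
      exact (hempty X a).elim
    · apply Equiv.injective (SSet.yonedaEquiv (X := H ⋙ forget GrpCat.{u}) (n := ⦋0⦌))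
      have hl : elG (G := G) (((SSet.yonedaEquiv (X := G ⋙ forget GrpCat.{u}) (n := ⦋0⦌)).symm g).app (op ⦋0⦌)
          (stdSimplex.objEquiv.symm (𝟙 (⦋0⦌ : SimplexCategory)))) = g := by
        show G.map (𝟙 (⦋0⦌ : SimplexCategory)).op g = g
        rw [op_id, G.map_id]
        rfl
      show f.app _ (elG (G := G) (((SSet.yonedaEquiv (X := G ⋙ forget GrpCat.{u}) (n := ⦋0⦌)).symm g).app (op ⦋0⦌)
          (stdSimplex.objEquiv.symm (𝟙 (⦋0⦌ : SimplexCategory)))))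
        = elG (G := H) (v.app (op ⦋0⦌) (stdSimplex.objEquiv.symm (𝟙 (⦋0⦌ : SimplexCategory))))
      rw [hl]
      exact hgy
  | succ m =>
    -- the element of `H` corresponding to the bottom map
    obtain ⟨y, hydef⟩ : ∃ y : H.obj (op ⦋m+1⦌),
        y = elG (G := H) (v.app (op ⦋m+1⦌) (stdSimplex.objEquiv.symm (𝟙 (⦋m+1⦌ : SimplexCategory)))) :=
      ⟨_, rfl⟩
    -- commutativity of the square, element-wise on the faces of the horn
    have hsq : ∀ (j : Fin (m+2)) (hj : j ≠ i),
        f.app (op ⦋m⦌) (elG (u.app (op ⦋m⦌) (horn.face i j hj)))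
          = elG (G := H) (v.app (op ⦋m⦌)
              ((Λ[m+1, i]).ι.app (op ⦋m⦌) (horn.face i j hj))) :=
      fun j hj => congrArg (fun (t : (Λ[m+1, i] : SSet.{u}) ⟶ (H ⋙ forget GrpCat.{u})) =>
        t.app (op ⦋m⦌) (horn.face i j hj)) sq.w
    have hy : ∀ (j : Fin (m+2)) (hj : j ≠ i),
        H.map (SimplexCategory.δ j).op y
          = f.app _ (elG (u.app (op ⦋m⦌) (horn.face i j hj))) := by
      intro j hj
      have hnat : elG (G := H) (v.app (op ⦋m⦌) (Δ[m+1].map (SimplexCategory.δ j).op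
            (stdSimplex.objEquiv.symm (𝟙 (⦋m+1⦌ : SimplexCategory)))))
          = H.map (SimplexCategory.δ j).op (elG (G := H) (v.app (op ⦋m+1⦌)
            (stdSimplex.objEquiv.symm (𝟙 (⦋m+1⦌ : SimplexCategory))))) :=
        FunctorToTypes.naturality v _ _
      have hface : Δ[m+1].map (SimplexCategory.δ j).op
            (stdSimplex.objEquiv.symm (𝟙 (⦋m+1⦌ : SimplexCategory)))
          = (Λ[m+1, i]).ι.app (op ⦋m⦌) (horn.face i j hj) := by
        show _ = stdSimplex.objEquiv.symm (SimplexCategory.δ j)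
        rw [stdSimplex.map_apply]
        simp only [Equiv.apply_symm_apply, Quiver.Hom.unop_op, Category.comp_id]
      rw [hydef, ← hnat, hface, hsq j hj]
    obtain ⟨g, hgy, hgface⟩ := lift_elem f m i (hsurj _) u y hy
    refine ⟨⟨⟨(SSet.yonedaEquiv (X := G ⋙ forget GrpCat.{u}) (n := ⦋m+1⦌)).symm g, ?_, ?_⟩⟩⟩
    · apply SSet.horn.hom_ext
      intro j hj
      exact hgface j hj
    · apply Equiv.injective (SSet.yonedaEquiv (X := H ⋙ forget GrpCat.{u}) (n := ⦋m+1⦌))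
      have hl : elG (G := G) (((SSet.yonedaEquiv (X := G ⋙ forget GrpCat.{u}) (n := ⦋m+1⦌)).symm g).app
          (op ⦋m+1⦌) (stdSimplex.objEquiv.symm (𝟙 (⦋m+1⦌ : SimplexCategory)))) = g := by
        show G.map (𝟙 (⦋m+1⦌ : SimplexCategory)).op g = g
        rw [op_id, G.map_id]
        rfl
      show f.app _ (elG (G := G) (((SSet.yonedaEquiv (X := G ⋙ forget GrpCat.{u}) (n := ⦋m+1⦌)).symm g).app
          (op ⦋m+1⦌) (stdSimplex.objEquiv.symm (𝟙 (⦋m+1⦌ : SimplexCategory)))))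
        = elG (G := H) (v.app (op ⦋m+1⦌) (stdSimplex.objEquiv.symm (𝟙 (⦋m+1⦌ : SimplexCategory))))
      rw [hl, hgy, hydef]
end

section
/- Let g and h be nilpotent dg Lie algebras over a field of characteristic zero and f: g → h a surjective dg Lie algebra map. Then the induced map MC(g) → MC(h) on Maurer–Cartan sets need not be surjective in general, but the induced map on Maurer–Cartan sets of the dg Lie algebras tensored with any finite-dimensional nilpotent commutative algebra m, MC(m ⊗ g) → MC(m ⊗ h), is surjective whenever f is surjective and a quasi-isomorphism. -/
/-- A differential graded Lie algebra structure on a ℤ-graded vector space `L`,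
with differential of degree `+1`, graded antisymmetry, graded Leibniz rule and
graded Jacobi identity (signs via the Koszul rule). -/
structure DGLAOn (k : Type) [Field k] (L : ℤ → Type)
    [∀ i, AddCommGroup (L i)] [∀ i, Module k (L i)] where
  bracket : ∀ {i j : ℤ}, L i →ₗ[k] L j →ₗ[k] L (i + j)
  d : ∀ {i : ℤ}, L i →ₗ[k] L (i + 1)
  d_sq : ∀ {i : ℤ} (x : L i), d (d x) = 0
  antisymm : ∀ {i j : ℤ} (x : L i) (y : L j),
    bracket x y = (-((-1 : k) ^ (i * j))) •
      cast (congrArg L (add_comm j i)) (bracket y x)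
  leibniz : ∀ {i j : ℤ} (x : L i) (y : L j),
    d (bracket x y)
      = cast (congrArg L (show i + 1 + j = i + j + 1 by ring)) (bracket (d x) y)
      + ((-1 : k) ^ i) •
          cast (congrArg L (show i + (j + 1) = i + j + 1 by ring)) (bracket x (d y))
  jacobi : ∀ {i j l : ℤ} (x : L i) (y : L j) (z : L l),
    ((-1 : k) ^ (i * l)) •
        cast (congrArg L (show i + (j + l) = i + j + l by ring)) (bracket x (bracket y z))
      + ((-1 : k) ^ (i * j)) •
          cast (congrArg L (show j + (l + i) = i + j + l by ring)) (bracket y (bracket z x))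
      + ((-1 : k) ^ (l * j)) •
          cast (congrArg L (show l + (i + j) = i + j + l by ring)) (bracket z (bracket x y))
      = 0

variable {k : Type} [Field k] {L : ℤ → Type} [∀ i, AddCommGroup (L i)] [∀ i, Module k (L i)]

/-- The Maurer–Cartan equation `dx + ½[x,x] = 0` for a degree-one element. -/
def DGLAOn.IsMC (g : DGLAOn k L) (x : L 1) : Prop :=
  g.d x + (2 : k)⁻¹ • g.bracket x x = 0

/-- A dg Lie algebra is nilpotent if it has a finite central filtration:
`F 0 = ⊤`, `F N = ⊥`, and `⁅L, F n⁆ ⊆ F (n+1)`. -/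
def DGLAOn.IsNilpotent (g : DGLAOn k L) : Prop :=
  ∃ (N : ℕ) (F : ℕ → ∀ i : ℤ, Submodule k (L i)),
    (∀ i, F 0 i = ⊤) ∧ (∀ i, F N i = ⊥) ∧
    ∀ (n : ℕ) {i j : ℤ} (x : L i) (y : L j), y ∈ F n j → g.bracket x y ∈ F (n + 1) (i + j)

open TensorProduct

variable {Lg Lh : ℤ → Type} [∀ i, AddCommGroup (Lg i)] [∀ i, Module k (Lg i)]
  [∀ i, AddCommGroup (Lh i)] [∀ i, Module k (Lh i)]

/-- A morphism of dg Lie algebras: a degreewise linear map commuting with the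
differentials and the brackets. -/
def IsDGLAHom (g : DGLAOn k Lg) (h : DGLAOn k Lh) (f : ∀ i : ℤ, Lg i →ₗ[k] Lh i) : Prop :=
  (∀ (i : ℤ) (x : Lg i), f (i + 1) (g.d x) = h.d (f i x)) ∧
  (∀ (i j : ℤ) (x : Lg i) (y : Lg j),
    f (i + j) (g.bracket x y) = h.bracket (f i x) (f j y))

/-- `f` is a quasi-isomorphism: it induces a bijection on cohomology
(surjectivity and injectivity on cohomology classes, stated elementwise). -/
def IsQuasiIso (g : DGLAOn k Lg) (h : DGLAOn k Lh) (f : ∀ i : ℤ, Lg i →ₗ[k] Lh i) : Prop :=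
  (∀ (i : ℤ) (y : Lh i), h.d y = 0 →
      ∃ x : Lg i, g.d x = 0 ∧ ∃ z : Lh (i - 1),
        f i x - y = cast (congrArg Lh (show i - 1 + 1 = i by ring)) (h.d z)) ∧
  (∀ (i : ℤ) (x : Lg i), g.d x = 0 →
      (∃ z : Lh (i - 1), f i x = cast (congrArg Lh (show i - 1 + 1 = i by ring)) (h.d z)) →
      ∃ w : Lg (i - 1), x = cast (congrArg Lg (show i - 1 + 1 = i by ring)) (g.d w))

section TTsec
variable {k : Type} [Field k] {M A B C : Type}
  [AddCommGroup M] [Module k M] [AddCommGroup A] [Module k A]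
  [AddCommGroup B] [Module k B] [AddCommGroup C] [Module k C]

/-- span of pure tensors with factors in P, Q -/
def TT (P : Submodule k M) (Q : Submodule k A) : Submodule k (M ⊗[k] A) :=
  Submodule.span k {z | ∃ p ∈ P, ∃ q ∈ Q, z = p ⊗ₜ[k] q}

lemma tmul_mem_TT {P : Submodule k M} {Q : Submodule k A} {p : M} {q : A}
    (hp : p ∈ P) (hq : q ∈ Q) : p ⊗ₜ[k] q ∈ TT P Q :=
  Submodule.subset_span ⟨p, hp, q, hq, rfl⟩

lemma TT_mono {P P' : Submodule k M} {Q Q' : Submodule k A} (h1 : P ≤ P') (h2 : Q ≤ Q') :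
    TT P Q ≤ TT P' Q' := by
  apply Submodule.span_le.2
  rintro z ⟨p, hp, q, hq, rfl⟩
  exact tmul_mem_TT (h1 hp) (h2 hq)

lemma TT_top_top : (TT (⊤ : Submodule k M) (⊤ : Submodule k A)) = ⊤ := by
  apply le_antisymm le_top
  rw [← TensorProduct.span_tmul_eq_top k M A]
  exact Submodule.span_le.2 (by rintro z ⟨m, n, rfl⟩; exact tmul_mem_TT trivial trivial)

lemma TT_bot_left {Q : Submodule k A} : TT (⊥ : Submodule k M) Q = ⊥ := by
  apply le_antisymm _ bot_le
  apply Submodule.span_le.2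
  rintro z ⟨p, hp, q, hq, rfl⟩
  simp only [Submodule.mem_bot] at hp
  rw [hp, zero_tmul]
  exact Submodule.zero_mem _

lemma TT_map {P : Submodule k M} {Q : Submodule k A} {P' : Submodule k M} {Q' : Submodule k B}
    (F : M ⊗[k] A →ₗ[k] M ⊗[k] B)
    (hF : ∀ p ∈ P, ∀ q ∈ Q, F (p ⊗ₜ[k] q) ∈ TT P' Q') :
    ∀ x ∈ TT P Q, F x ∈ TT P' Q' := by
  intro x hx
  induction hx using Submodule.span_induction with
  | mem z hz => obtain ⟨p, hp, q, hq, rfl⟩ := hz; exact hF p hp q hq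
  | zero => simp
  | add a b _ _ ha hb => rw [map_add]; exact Submodule.add_mem _ ha hb
  | smul c a _ ha => rw [map_smul]; exact Submodule.smul_mem _ c ha

lemma TT_bilin {P : Submodule k M} {Q : Submodule k A} {P1 : Submodule k M} {Q1 : Submodule k B}
    {P2 : Submodule k M} {Q2 : Submodule k C}
    (G : M ⊗[k] A →ₗ[k] M ⊗[k] B →ₗ[k] M ⊗[k] C)
    (hG : ∀ p ∈ P, ∀ q ∈ Q, ∀ p' ∈ P1, ∀ q' ∈ Q1, G (p ⊗ₜ[k] q) (p' ⊗ₜ[k] q') ∈ TT P2 Q2) :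
    ∀ x ∈ TT P Q, ∀ y ∈ TT P1 Q1, G x y ∈ TT P2 Q2 := by
  intro x hx
  induction hx using Submodule.span_induction with
  | mem z hz =>
      obtain ⟨p, hp, q, hq, rfl⟩ := hz
      exact TT_map (G _) (fun p' hp' q' hq' => hG p hp q hq p' hp' q' hq')
  | zero => intro y hy; simp
  | add a b _ _ ha hb => intro y hy; rw [map_add, LinearMap.add_apply];
                         exact Submodule.add_mem _ (ha y hy) (hb y hy)
  | smul c a _ ha => intro y hy; rw [map_smul, LinearMap.smul_apply];
                     exact Submodule.smul_mem _ c (ha y hy)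

lemma lTensor_eq_zero_on_TT {f : A →ₗ[k] B} {P : Submodule k M} :
    ∀ x ∈ TT P (LinearMap.ker f), LinearMap.lTensor M f x = 0 := by
  intro x hx
  induction hx using Submodule.span_induction with
  | mem z hz =>
      obtain ⟨p, hp, q, hq, rfl⟩ := hz
      rw [LinearMap.lTensor_tmul, LinearMap.mem_ker.1 hq, tmul_zero]
  | zero => simp
  | add a b _ _ ha hb => rw [map_add, ha, hb, add_zero]
  | smul c a _ ha => rw [map_smul, ha, smul_zero]

/-- kernel of lTensor is contained in TT ⊤ (ker f), over a field. -/
lemma mem_TT_ker {f : A →ₗ[k] B} {x : M ⊗[k] A} (hx : LinearMap.lTensor M f x = 0) :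
    x ∈ TT (⊤ : Submodule k M) (LinearMap.ker f) := by
  have hex : Function.Exact (LinearMap.lTensor M (LinearMap.ker f).subtype)
      (LinearMap.lTensor M f) :=
    Module.Flat.lTensor_exact M (LinearMap.exact_subtype_ker_map f)
  obtain ⟨y, hy⟩ := (hex x).1 hx
  rw [← hy]
  apply TT_map (P := ⊤) (Q := ⊤) _ _ y (by rw [TT_top_top]; trivial)
  intro p _ q _
  rw [LinearMap.lTensor_tmul]
  exact tmul_mem_TT trivial q.2

end TTsec

section Key
variable {k : Type} [Field k] {M A B C : Type}
  [AddCommGroup M] [Module k M] [AddCommGroup A] [Module k A]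
  [AddCommGroup B] [Module k B] [AddCommGroup C] [Module k C]

/-- contraction against a functional in the left factor -/
noncomputable def piphi (φ : M →ₗ[k] k) : M ⊗[k] A →ₗ[k] A :=
  (TensorProduct.lid k A).toLinearMap ∘ₗ LinearMap.rTensor A φ

lemma piphi_tmul (φ : M →ₗ[k] k) (m : M) (a : A) : piphi φ (m ⊗ₜ[k] a) = φ m • a := by
  simp [piphi]

lemma piphi_zero_on (φ : M →ₗ[k] k) {V' : Submodule k M} {Q : Submodule k A}
    (hφ : ∀ v ∈ V', φ v = 0) : ∀ x ∈ TT V' Q, piphi φ x = 0 := by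
  intro x hx
  induction hx using Submodule.span_induction with
  | mem z hz => obtain ⟨p, hp, q, _, rfl⟩ := hz; rw [piphi_tmul, hφ p hp, zero_smul]
  | zero => simp
  | add a b _ _ ha hb => rw [map_add, ha, hb, add_zero]
  | smul c a _ ha => rw [map_smul, ha, smul_zero]

lemma piphi_mem (φ : M →ₗ[k] k) {V : Submodule k M} {Q : Submodule k A} :
    ∀ x ∈ TT V Q, piphi φ x ∈ Q := by
  intro x hx
  induction hx using Submodule.span_induction with
  | mem z hz => obtain ⟨p, _, q, hq, rfl⟩ := hz; rw [piphi_tmul]; exact Q.smul_mem _ hq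
  | zero => simp
  | add a b _ _ ha hb => rw [map_add]; exact Q.add_mem ha hb
  | smul c a _ ha => rw [map_smul]; exact Q.smul_mem c ha

/-- adapted family for a pair of subspaces V' ≤ V of a finite-dimensional space. -/
lemma exists_adapted [FiniteDimensional k M] (V' V : Submodule k M) (hVV : V' ≤ V) :
    ∃ (n : ℕ) (e : Fin n → M) (φ : Fin n → (M →ₗ[k] k)),
      (∀ t, e t ∈ V) ∧
      (∀ t s, φ t (e s) = if t = s then 1 else 0) ∧
      (∀ t, ∀ v ∈ V', φ t v = 0) ∧
      (∀ (Q : Submodule k A) (x : M ⊗[k] A), x ∈ TT V Q →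
        x - ∑ t, e t ⊗ₜ[k] piphi (φ t) x ∈ TT V' Q) := by
  classical
  set q : M →ₗ[k] M ⧸ V' := V'.mkQ with hq
  set Vb : Submodule k (M ⧸ V') := V.map q with hVb
  obtain ⟨W, hW⟩ := Submodule.exists_isCompl Vb
  set pr : (M ⧸ V') →ₗ[k] Vb := Submodule.linearProjOfIsCompl Vb W hW
  set b : Module.Basis (Fin (Module.finrank k Vb)) k Vb := Module.finBasis k Vb
  refine ⟨Module.finrank k Vb, ?_, ?_, ?_, ?_, ?_, ?_⟩
  · -- e
    exact fun t => (fun t => Classical.choose (Submodule.mem_map.1 (b t).2)) t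
  · -- φ
    exact fun t => (b.coord t ∘ₗ pr) ∘ₗ q
  · intro t
    exact (Classical.choose_spec (Submodule.mem_map.1 (b t).2)).1
  · intro t s
    have hes : q (Classical.choose (Submodule.mem_map.1 (b s).2)) = ↑(b s) :=
      (Classical.choose_spec (Submodule.mem_map.1 (b s).2)).2
    simp only [LinearMap.comp_apply, hes]
    have : pr ↑(b s) = b s := Submodule.linearProjOfIsCompl_apply_left hW (b s)
    rw [this]
    rw [Module.Basis.coord_apply, Module.Basis.repr_self]
    by_cases h : t = s
    · subst h; simp
    · simp [Finsupp.single_apply, Ne.symm h, h]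
  · intro t v hv
    have : q v = 0 := (Submodule.Quotient.mk_eq_zero V').2 hv
    simp only [LinearMap.comp_apply, this, map_zero]
  · intro Q x hx
    set e : Fin (Module.finrank k Vb) → M :=
      fun t => Classical.choose (Submodule.mem_map.1 (b t).2) with he
    set φ : Fin (Module.finrank k Vb) → (M →ₗ[k] k) :=
      fun t => (b.coord t ∘ₗ pr) ∘ₗ q with hφ
    -- linear map x ↦ x - ∑ e t ⊗ π t x
    set Nm : M ⊗[k] A →ₗ[k] M ⊗[k] A :=
      LinearMap.id - ∑ t, (TensorProduct.mk k M A (e t)) ∘ₗ piphi (φ t) with hNm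
    have hNx : Nm x = x - ∑ t, e t ⊗ₜ[k] piphi (φ t) x := by
      simp [hNm, LinearMap.sub_apply, LinearMap.sum_apply]
    rw [← hNx]
    clear hNx
    induction hx using Submodule.span_induction with
    | mem z hz =>
        obtain ⟨p, hp, r, hr, rfl⟩ := hz
        have hNz : Nm (p ⊗ₜ[k] r) = (p - ∑ t, φ t p • e t) ⊗ₜ[k] r := by
          simp only [hNm, LinearMap.sub_apply, LinearMap.id_apply, LinearMap.sum_apply,
            LinearMap.comp_apply, piphi_tmul, TensorProduct.mk_apply]
          rw [TensorProduct.sub_tmul, TensorProduct.sum_tmul]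
          congr 1
          apply Finset.sum_congr rfl
          intro t _
          rw [TensorProduct.smul_tmul, TensorProduct.tmul_smul]
        rw [hNz]
        apply tmul_mem_TT _ hr
        -- p - ∑ φ t p • e t ∈ V'
        have hqp : q p ∈ Vb := Submodule.mem_map_of_mem hp
        set w : Vb := ⟨q p, hqp⟩ with hw
        have hφp : ∀ t, φ t p = b.repr w t := by
          intro t
          simp only [hφ, LinearMap.comp_apply]
          show (b.coord t) (pr ↑w) = (b.repr w) t
          rw [show pr ↑w = w from Submodule.linearProjOfIsCompl_apply_left hW w, Module.Basis.coord_apply]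
        have hqe : ∀ t, q (e t) = ↑(b t) :=
          fun t => (Classical.choose_spec (Submodule.mem_map.1 (b t).2)).2
        rw [← Submodule.Quotient.mk_eq_zero V']
        have : q (p - ∑ t, φ t p • e t) = 0 := by
          rw [map_sub, map_sum]
          have : ∑ t, q (φ t p • e t) = ∑ t, b.repr w t • (↑(b t) : M ⧸ V') := by
            apply Finset.sum_congr rfl
            intro t _
            rw [map_smul, hqe t, hφp t]
          rw [this]
          have hrepr : ∑ t, b.repr w t • (b t) = w := b.sum_repr w
          have : ∑ t, b.repr w t • (↑(b t) : M ⧸ V') = ((∑ t, b.repr w t • b t : Vb) : M ⧸ V') := by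
            push_cast
            rfl
          rw [this, hrepr]
          simp [hw]
        exact this
    | zero => simp only [map_zero]; exact Submodule.zero_mem _
    | add a b' _ _ ha hb => rw [map_add]; exact Submodule.add_mem _ ha hb
    | smul c a _ ha => rw [map_smul]; exact Submodule.smul_mem _ c ha
end Key

section KeyStep
variable {k : Type} [Field k] {M A B C : Type}
  [AddCommGroup M] [Module k M] [AddCommGroup A] [Module k A]
  [AddCommGroup B] [Module k B] [AddCommGroup C] [Module k C]

lemma key_step [FiniteDimensional k M]
    (V' V : Submodule k M) (hVV : V' ≤ V)
    (KA : Submodule k A) (KB : Submodule k B)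
    (d1 : A →ₗ[k] B) (d2 : B →ₗ[k] C)
    (hacyc : ∀ b ∈ KB, d2 b = 0 → ∃ a ∈ KA, d1 a = b)
    (c : M ⊗[k] B) (hc : c ∈ TT V KB)
    (hdc : (LinearMap.lTensor M d2) c ∈ TT V' (⊤ : Submodule k C)) :
    ∃ ξ ∈ TT V KA, c - LinearMap.lTensor M d1 ξ ∈ TT V' KB := by
  classical
  obtain ⟨n, e, φ, heV, heφ, hφV', hdec⟩ := exists_adapted (A := B) V' V hVV
  set x : Fin n → B := fun t => piphi (φ t) c with hx
  have hxK : ∀ t, x t ∈ KB := fun t => piphi_mem (φ t) c hc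
  have hc' : c - ∑ t, e t ⊗ₜ[k] x t ∈ TT V' KB := hdec KB c hc
  have hdx : ∀ t, d2 (x t) = 0 := by
    intro t
    have h1 : piphi (φ t) (LinearMap.lTensor M d2 c) = 0 :=
      piphi_zero_on (φ t) (hφV' t) _ hdc
    have hsplit : LinearMap.lTensor M d2 c
        = LinearMap.lTensor M d2 (c - ∑ s, e s ⊗ₜ[k] x s)
          + ∑ s, e s ⊗ₜ[k] d2 (x s) := by
      have h0 : c = (c - ∑ s, e s ⊗ₜ[k] x s) + ∑ s, e s ⊗ₜ[k] x s := by abel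
      calc LinearMap.lTensor M d2 c
          = LinearMap.lTensor M d2 ((c - ∑ s, e s ⊗ₜ[k] x s) + ∑ s, e s ⊗ₜ[k] x s) := by
            rw [← h0]
        _ = LinearMap.lTensor M d2 (c - ∑ s, e s ⊗ₜ[k] x s)
              + ∑ s, e s ⊗ₜ[k] d2 (x s) := by
            rw [map_add, map_sum]
            simp only [LinearMap.lTensor_tmul]
    have h2 : piphi (φ t) (LinearMap.lTensor M d2 (c - ∑ s, e s ⊗ₜ[k] x s)) = 0 := by
      apply piphi_zero_on (φ t) (hφV' t)
      apply TT_map (P := V') (Q := KB) (P' := V') (Q' := (⊤ : Submodule k C)) _ _ _ hc'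
      intro p hp q hq
      rw [LinearMap.lTensor_tmul]
      exact tmul_mem_TT hp trivial
    have h3 : piphi (φ t) (∑ s, e s ⊗ₜ[k] d2 (x s)) = d2 (x t) := by
      rw [map_sum]
      have : ∀ s, piphi (φ t) (e s ⊗ₜ[k] d2 (x s)) = if t = s then d2 (x s) else 0 := by
        intro s
        rw [piphi_tmul, heφ t s]
        by_cases h : t = s <;> simp [h]
      rw [Finset.sum_congr rfl fun s _ => this s]
      simp
    rw [hsplit, map_add, h2, h3, zero_add] at h1
    exact h1
  choose a haK had using fun t => hacyc (x t) (hxK t) (hdx t)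
  refine ⟨∑ t, e t ⊗ₜ[k] a t, ?_, ?_⟩
  · exact Submodule.sum_mem _ fun t _ => tmul_mem_TT (heV t) (haK t)
  · have : LinearMap.lTensor M d1 (∑ t, e t ⊗ₜ[k] a t) = ∑ t, e t ⊗ₜ[k] x t := by
      rw [map_sum]
      exact Finset.sum_congr rfl fun t _ => by rw [LinearMap.lTensor_tmul, had t]
    rw [this]
    exact hc'
end KeyStep

set_option maxHeartbeats 1000000 in
theorem mc_aux
    [CharZero k]
    (g : DGLAOn k Lg) (h : DGLAOn k Lh)
    (f : ∀ i : ℤ, Lg i →ₗ[k] Lh i)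
    (hhom : IsDGLAHom g h f)
    (hsurj : ∀ i : ℤ, Function.Surjective (f i))
    (hqis : IsQuasiIso g h f)
    (R : Type) [CommRing R] [Algebra k R]
    (m : Ideal R) [FiniteDimensional k ↥m]
    (hNil : ∃ N : ℕ, m ^ N = ⊥)
    (tg : DGLAOn k (fun i : ℤ => (↥m) ⊗[k] Lg i))
    (th : DGLAOn k (fun i : ℤ => (↥m) ⊗[k] Lh i))
    (htg_br : ∀ (i j : ℤ) (a b : ↥m) (x : Lg i) (y : Lg j),
      tg.bracket (a ⊗ₜ[k] x) (b ⊗ₜ[k] y)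
        = (⟨(a : R) * b, m.mul_mem_left _ b.2⟩ : ↥m) ⊗ₜ[k] g.bracket x y)
    (htg_d : ∀ (i : ℤ) (a : ↥m) (x : Lg i),
      tg.d (a ⊗ₜ[k] x) = a ⊗ₜ[k] g.d x)
    (hth_br : ∀ (i j : ℤ) (a b : ↥m) (x : Lh i) (y : Lh j),
      th.bracket (a ⊗ₜ[k] x) (b ⊗ₜ[k] y)
        = (⟨(a : R) * b, m.mul_mem_left _ b.2⟩ : ↥m) ⊗ₜ[k] h.bracket x y)
    (hth_d : ∀ (i : ℤ) (a : ↥m) (x : Lh i),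
      th.d (a ⊗ₜ[k] x) = a ⊗ₜ[k] h.d x) :
    ∀ v : (↥m) ⊗[k] Lh 1, th.IsMC v →
      ∃ u : (↥m) ⊗[k] Lg 1,
        tg.IsMC u ∧ TensorProduct.map LinearMap.id (f 1) u = v := by
  classical
  intro v hv
  obtain ⟨N0, hN0⟩ := hNil
  -- the filtration of ↥m by powers of m
  let Ms : ℕ → Submodule k ↥m := fun s =>
    Submodule.comap ((m.subtype).restrictScalars k) (Submodule.restrictScalars k (m ^ s))
  have hMs_mem : ∀ (s : ℕ) (x : ↥m), x ∈ Ms s ↔ (x : R) ∈ m ^ s := fun s x => Iff.rfl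
  have hMs1 : Ms 1 = ⊤ := by
    apply le_antisymm le_top
    intro x _
    rw [hMs_mem, pow_one]
    exact x.2
  have hMs_le : ∀ {p q : ℕ}, p ≤ q → Ms q ≤ Ms p := by
    intro p q hpq x hx
    exact Ideal.pow_le_pow_right hpq hx
  have hMsmul : ∀ {p q : ℕ} (a b : ↥m), a ∈ Ms p → b ∈ Ms q →
      (⟨(a : R) * b, m.mul_mem_left _ b.2⟩ : ↥m) ∈ Ms (p + q) := by
    intro p q a b ha hb
    rw [hMs_mem, pow_add]
    exact Ideal.mul_mem_mul ha hb
  -- identification of the tensored differential and compatibility with f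
  have htgd : ∀ i : ℤ,
      (tg.d : ↥m ⊗[k] Lg i →ₗ[k] ↥m ⊗[k] Lg (i+1)) = LinearMap.lTensor ↥m g.d := by
    intro i
    apply TensorProduct.ext'
    intro a x
    rw [LinearMap.lTensor_tmul]
    exact htg_d i a x
  have hfd : ∀ (i : ℤ) (u : ↥m ⊗[k] Lg i),
      LinearMap.lTensor ↥m (f (i+1)) (tg.d u) = th.d (LinearMap.lTensor ↥m (f i) u) := by
    intro i u
    induction u using TensorProduct.induction_on with
    | zero => simp
    | tmul a x =>
        rw [htg_d i a x, LinearMap.lTensor_tmul, LinearMap.lTensor_tmul, hth_d, hhom.1]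
    | add u1 u2 h1 h2 => simp only [map_add, h1, h2]
  have hfbr : ∀ (i j : ℤ) (u : ↥m ⊗[k] Lg i) (w : ↥m ⊗[k] Lg j),
      LinearMap.lTensor ↥m (f (i+j)) (tg.bracket u w)
        = th.bracket (LinearMap.lTensor ↥m (f i) u) (LinearMap.lTensor ↥m (f j) w) := by
    intro i j u w
    induction u using TensorProduct.induction_on with
    | zero => simp
    | tmul a x =>
        induction w using TensorProduct.induction_on with
        | zero => simp
        | tmul b y =>
            rw [htg_br, LinearMap.lTensor_tmul, LinearMap.lTensor_tmul,
              LinearMap.lTensor_tmul, hth_br, hhom.2]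
        | add w1 w2 h1 h2 => simp only [map_add, h1, h2]
    | add u1 u2 h1 h2 => simp only [map_add, LinearMap.add_apply, h1, h2]
  -- bracket membership
  have hbr_mem : ∀ (p q : ℕ) (i j : ℤ) (Qi : Submodule k (Lg i)) (Qj : Submodule k (Lg j))
      (Qij : Submodule k (Lg (i+j))),
      (∀ x ∈ Qi, ∀ y ∈ Qj, g.bracket x y ∈ Qij) →
      ∀ u ∈ TT (Ms p) Qi, ∀ w ∈ TT (Ms q) Qj, tg.bracket u w ∈ TT (Ms (p+q)) Qij := by
    intro p q i j Qi Qj Qij hQ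
    apply TT_bilin (G := tg.bracket)
    intro a ha x hx b hb y hy
    rw [htg_br]
    exact tmul_mem_TT (hMsmul a b ha hb) (hQ x hx y hy)
  -- acyclicity of the kernel in degree 2
  have hacyc : ∀ x ∈ LinearMap.ker (f (1+1)), g.d x = 0 →
      ∃ a ∈ LinearMap.ker (f 1), g.d a = x := by
    intro x hxker hdx
    have hfx : f (1+1) x = 0 := hxker
    obtain ⟨w, hw⟩ := hqis.2 (1+1) x hdx
      ⟨0, by rw [hfx, map_zero]; exact (eq_of_heq (cast_heq _ _)).symm⟩
    have hgw : x = g.d (show Lg 1 from w) := hw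
    have hdy : h.d (f 1 (show Lg 1 from w)) = 0 := by
      have h1 : f (1+1) (g.d (show Lg 1 from w)) = h.d (f 1 (show Lg 1 from w)) :=
        hhom.1 1 (show Lg 1 from w)
      rw [← h1, ← hgw, hfx]
    obtain ⟨x₁, hdx₁, z, hz⟩ := hqis.1 1 (f 1 (show Lg 1 from w)) hdy
    obtain ⟨z', hz'⟩ := hsurj (1-1) z
    refine ⟨(show Lg 1 from w) - x₁ + (show Lg 1 from g.d z'), ?_, ?_⟩
    · rw [LinearMap.mem_ker, map_add, map_sub]
      have h5 : f 1 (show Lg 1 from g.d z') = h.d (f (1-1) z') := hhom.1 (1-1) z'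
      have h6 : f 1 x₁ - f 1 (show Lg 1 from w) = h.d z := hz
      rw [h5, hz']
      have : f 1 (show Lg 1 from w) - f 1 x₁ = - h.d z := by
        rw [← h6]; abel
      rw [this]
      abel
    · rw [map_add, map_sub, ← hgw, hdx₁]
      have h7 : g.d (show Lg 1 from g.d z') = 0 := g.d_sq z'
      rw [h7]
      abel
  -- [u,[u,u]] = 0 in tg
  have hJ : ∀ u : ↥m ⊗[k] Lg 1, tg.bracket u (tg.bracket u u) = 0 := by
    intro u
    have jac : ((-1:k)^((1:ℤ)*1)) • (tg.bracket u (tg.bracket u u))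
        + ((-1:k)^((1:ℤ)*1)) • (tg.bracket u (tg.bracket u u))
        + ((-1:k)^((1:ℤ)*1)) • (tg.bracket u (tg.bracket u u)) = 0 :=
      tg.jacobi (i := 1) (j := 1) (l := 1) u u u
    have c2 : ((-1:k)^((1:ℤ)*1)) = -1 := by norm_num
    rw [c2] at jac
    have h3 : ((-3 : k)) • (tg.bracket u (tg.bracket u u)) = 0 := by
      rw [show ((-3:k)) = (-1) + (-1) + (-1) by norm_num, add_smul, add_smul]
      exact jac
    have h3ne : ((-3 : k)) ≠ 0 := by norm_num
    exact (smul_eq_zero.1 h3).resolve_left h3ne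
  -- Bianchi identity for the curvature
  have hBianchi : ∀ u : ↥m ⊗[k] Lg 1,
      tg.d (tg.d u + (2:k)⁻¹ • tg.bracket u u)
        = -(tg.bracket u (tg.d u + (2:k)⁻¹ • tg.bracket u u)) := by
    intro u
    have leib' : tg.d (tg.bracket u u)
        = tg.bracket (tg.d u) u
          + ((-1:k)^((1:ℤ))) • (id (α := ↥m ⊗[k] Lg (1+1+1)) (tg.bracket u (tg.d u))) :=
      tg.leibniz u u
    have anti' : tg.bracket (tg.d u) u
        = (-((-1:k)^(((1:ℤ)+1)*1))) • (id (α := ↥m ⊗[k] Lg (1+1+1)) (tg.bracket u (tg.d u))) :=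
      tg.antisymm (tg.d u) u
    have c1 : (-((-1:k)^(((1:ℤ)+1)*1))) = -1 := by norm_num
    have c2 : ((-1:k)^((1:ℤ))) = -1 := by norm_num
    rw [c1] at anti'
    rw [c2] at leib'
    rw [map_add, map_smul, leib', anti', tg.d_sq u]
    rw [map_add, map_smul, hJ u]
    simp only [id]
    module
  -- antisymmetry in degree (1,1)
  have hanti : ∀ u w : ↥m ⊗[k] Lg 1, tg.bracket w u = tg.bracket u w := by
    intro u w
    have h0 : tg.bracket w u = (-((-1:k)^((1:ℤ)*1))) • tg.bracket u w :=
      tg.antisymm w u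
    have c : (-((-1:k)^((1:ℤ)*1))) = 1 := by norm_num
    rw [c, one_smul] at h0
    exact h0
  -- main induction
  have main : ∀ s : ℕ, ∃ u : ↥m ⊗[k] Lg 1,
      LinearMap.lTensor ↥m (f 1) u = v ∧
      tg.d u + (2:k)⁻¹ • tg.bracket u u ∈ TT (Ms (s+1)) (LinearMap.ker (f (1+1))) := by
    intro s
    induction s with
    | zero =>
        obtain ⟨u0, hu0⟩ := LinearMap.lTensor_surjective ↥m (hsurj 1) v
        refine ⟨u0, hu0, ?_⟩
        have hker : LinearMap.lTensor ↥m (f (1+1))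
            (tg.d u0 + (2:k)⁻¹ • tg.bracket u0 u0) = 0 := by
          rw [map_add, map_smul, hfd 1 u0, hfbr 1 1 u0 u0, hu0]
          exact hv
        have := mem_TT_ker (M := ↥m) hker
        rwa [← hMs1] at this
    | succ s ih =>
        obtain ⟨u, hu, hFu⟩ := ih
        -- d of the curvature lies one step deeper
        have hdc : LinearMap.lTensor ↥m (g.d (i := 1+1))
            (tg.d u + (2:k)⁻¹ • tg.bracket u u) ∈ TT (Ms (s+1+1)) (⊤ : Submodule k (Lg (1+1+1))) := by
          rw [← htgd (1+1), hBianchi u]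
          apply Submodule.neg_mem
          have hmem := hbr_mem 1 (s+1) 1 (1+1) ⊤ (LinearMap.ker (f (1+1)))
            ⊤ (fun _ _ _ _ => trivial) u ?_ _ hFu
          · have he : Ms (1 + (s+1)) = Ms (s+1+1) := by rw [Nat.add_comm]
            rwa [he] at hmem
          · rw [hMs1, TT_top_top]; trivial
        obtain ⟨ξ, hξ, hcor⟩ := key_step (Ms (s+1+1)) (Ms (s+1)) (hMs_le (Nat.le_succ _))
          (LinearMap.ker (f 1)) (LinearMap.ker (f (1+1)))
          (g.d (i := 1)) (g.d (i := 1+1)) hacyc _ hFu hdc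
        refine ⟨u - ξ, ?_, ?_⟩
        · rw [map_sub, hu]
          have hξ0 : LinearMap.lTensor ↥m (f 1) ξ = 0 := lTensor_eq_zero_on_TT ξ hξ
          rw [hξ0, sub_zero]
        · have hFu' : tg.d (u - ξ) + (2:k)⁻¹ • tg.bracket (u - ξ) (u - ξ)
              = ((tg.d u + (2:k)⁻¹ • tg.bracket u u) - tg.d ξ)
                - tg.bracket u ξ + (2:k)⁻¹ • tg.bracket ξ ξ := by
            simp only [map_sub, LinearMap.sub_apply]
            rw [hanti u ξ]
            module
          rw [hFu']
          apply Submodule.add_mem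
          · apply Submodule.sub_mem
            · rw [← htgd 1] at hcor
              exact hcor
            · -- [u, ξ] ∈ TT (Ms (s+2)) K2
              have hbrK : ∀ x ∈ (⊤ : Submodule k (Lg 1)), ∀ y ∈ LinearMap.ker (f 1),
                  g.bracket x y ∈ LinearMap.ker (f (1+1)) := by
                intro x _ y hy
                rw [LinearMap.mem_ker] at hy ⊢
                rw [hhom.2 1 1 x y, hy, map_zero]
              have hmem := hbr_mem 1 (s+1) 1 1 ⊤ (LinearMap.ker (f 1))
                (LinearMap.ker (f (1+1))) hbrK u ?_ ξ hξ
              · have he : Ms (1 + (s+1)) = Ms (s+1+1) := by rw [Nat.add_comm]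
                rwa [he] at hmem
              · rw [hMs1, TT_top_top]; trivial
          · apply Submodule.smul_mem
            have hbrK : ∀ x ∈ (⊤ : Submodule k (Lg 1)), ∀ y ∈ LinearMap.ker (f 1),
                g.bracket x y ∈ LinearMap.ker (f (1+1)) := by
              intro x _ y hy
              rw [LinearMap.mem_ker] at hy ⊢
              rw [hhom.2 1 1 x y, hy, map_zero]
            have hmem := hbr_mem (s+1) (s+1) 1 1 ⊤ (LinearMap.ker (f 1))
              (LinearMap.ker (f (1+1))) hbrK ξ (TT_mono le_rfl le_top hξ) ξ hξ
            exact TT_mono (hMs_le (by omega)) le_rfl hmem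
  -- m is nilpotent
  obtain ⟨N, hN⟩ : ∃ N : ℕ, m ^ N = ⊥ := ⟨N0, hN0⟩
  obtain ⟨u, hu, hFu⟩ := main N
  have hMsN : Ms (N+1) = ⊥ := by
    apply le_antisymm _ bot_le
    intro x hx
    have h2 : (x : R) ∈ m ^ N := Ideal.pow_le_pow_right (Nat.le_succ N) hx
    rw [hN] at h2
    rw [Submodule.mem_bot]
    exact Subtype.ext h2
  rw [hMsN, TT_bot_left] at hFu
  exact ⟨u, (Submodule.mem_bot k).1 hFu, hu⟩

/-- let `f : g → h` be a surjective quasi-isomorphism of nilpotent dg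
Lie algebras over a field of characteristic zero and let `m` be the maximal ideal of a
(finite-dimensional) artinian local `k`-algebra `R`.  Then for the induced dg Lie
algebra structures on `m ⊗ g` and `m ⊗ h` (bracket `[a⊗x, b⊗y] = ab ⊗ [x,y]`,
differential `d(a⊗x) = a ⊗ dx`), the induced map `MC(m ⊗ g) → MC(m ⊗ h)` on
Maurer–Cartan sets is surjective. -/
theorem mc_surjective_of_surjective_quasiIso
    [CharZero k]
    (g : DGLAOn k Lg) (h : DGLAOn k Lh) (hg : g.IsNilpotent) (hh : h.IsNilpotent)
    (f : ∀ i : ℤ, Lg i →ₗ[k] Lh i)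
    (hhom : IsDGLAHom g h f)
    (hsurj : ∀ i : ℤ, Function.Surjective (f i))
    (hqis : IsQuasiIso g h f)
    (R : Type) [CommRing R] [Algebra k R] [IsLocalRing R] [IsArtinianRing R]
    [FiniteDimensional k R]
    (tg : DGLAOn k (fun i : ℤ => (↥(IsLocalRing.maximalIdeal R)) ⊗[k] Lg i))
    (th : DGLAOn k (fun i : ℤ => (↥(IsLocalRing.maximalIdeal R)) ⊗[k] Lh i))
    (htg_br : ∀ (i j : ℤ) (a b : ↥(IsLocalRing.maximalIdeal R)) (x : Lg i) (y : Lg j),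
      tg.bracket (a ⊗ₜ[k] x) (b ⊗ₜ[k] y)
        = (⟨(a : R) * b, (IsLocalRing.maximalIdeal R).mul_mem_left _ b.2⟩ :
            ↥(IsLocalRing.maximalIdeal R)) ⊗ₜ[k] g.bracket x y)
    (htg_d : ∀ (i : ℤ) (a : ↥(IsLocalRing.maximalIdeal R)) (x : Lg i),
      tg.d (a ⊗ₜ[k] x) = a ⊗ₜ[k] g.d x)
    (hth_br : ∀ (i j : ℤ) (a b : ↥(IsLocalRing.maximalIdeal R)) (x : Lh i) (y : Lh j),
      th.bracket (a ⊗ₜ[k] x) (b ⊗ₜ[k] y)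
        = (⟨(a : R) * b, (IsLocalRing.maximalIdeal R).mul_mem_left _ b.2⟩ :
            ↥(IsLocalRing.maximalIdeal R)) ⊗ₜ[k] h.bracket x y)
    (hth_d : ∀ (i : ℤ) (a : ↥(IsLocalRing.maximalIdeal R)) (x : Lh i),
      th.d (a ⊗ₜ[k] x) = a ⊗ₜ[k] h.d x) :
    ∀ v : (↥(IsLocalRing.maximalIdeal R)) ⊗[k] Lh 1, th.IsMC v →
      ∃ u : (↥(IsLocalRing.maximalIdeal R)) ⊗[k] Lg 1,
        tg.IsMC u ∧ TensorProduct.map LinearMap.id (f 1) u = v := by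
  have hNil : ∃ N : ℕ, (IsLocalRing.maximalIdeal R) ^ N = ⊥ := by
    have h0 := IsArtinianRing.isNilpotent_jacobson_bot (R := R)
    have h1 : (⊥ : Ideal R).jacobson = IsLocalRing.maximalIdeal R :=
      IsLocalRing.jacobson_eq_maximalIdeal ⊥ bot_ne_top
    rw [h1] at h0
    obtain ⟨N, hN⟩ := h0
    exact ⟨N, by simpa using hN⟩
  exact mc_aux g h f hhom hsurj hqis R (IsLocalRing.maximalIdeal R) hNil tg th
    htg_br htg_d hth_br hth_d
end
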